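/- Let F : ℝ × ℝ → ℝ be C⁴ and set f₁ = −O⁻F and f₂ = O⁺F. Then the pair (f₁, f₂) satisfies the reaction–diffusion system if and only if F satisfies the single scalar equation O⁺O⁻F = −K_μ(f₁, f₂); moreover, for a pair of this form, each of the two equations of the system separately is equivalent to this scalar equation. -/

import Mathlib

open Real MeasureTheory

noncomputable def pderivX (F : ℝ × ℝ → ℝ) : ℝ × ℝ → ℝ :=
  fun p => deriv (fun x => F (x, p.2)) p.1

noncomputable def pderivT (F : ℝ × ℝ → ℝ) : ℝ × ℝ → ℝ :=
  fun p => deriv (fun t => F (p.1, t)) p.2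

/-- The operator `O⁺ = ∂/∂t + v ∂/∂x − μ ∂²/∂x²`. -/
noncomputable def Oplus (v μ : ℝ) (F : ℝ × ℝ → ℝ) : ℝ × ℝ → ℝ :=
  fun p => pderivT F p + v * pderivX F p - μ * pderivX (pderivX F) p

/-- The operator `O⁻ = ∂/∂t − v ∂/∂x − μ ∂²/∂x²`. -/
noncomputable def Ominus (v μ : ℝ) (F : ℝ × ℝ → ℝ) : ℝ × ℝ → ℝ :=
  fun p => pderivT F p - v * pderivX F p - μ * pderivX (pderivX F) p

/-- The nonlinear operator `K_μ`. -/
noncomputable def Kmu (α β v μ : ℝ) (f₁ f₂ : ℝ × ℝ → ℝ) : ℝ × ℝ → ℝ :=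
  fun p =>
    -α * f₁ p + β * f₂ p + f₁ p * f₂ p
      + (μ * (f₁ p + f₂ p) / (4 * v)) *
          (((α + β) / v) * (f₁ p + f₂ p)
            - 4 * pderivX (fun q => f₁ q - f₂ q) p
            + (f₁ p + f₂ p) * (f₁ p - f₂ p) / v)
      + μ ^ 2 *
          (-((f₁ p + f₂ p) ^ 4) / (16 * v ^ 4)
            + (f₁ p + f₂ p) ^ 2 * pderivX (fun q => f₁ q + f₂ q) p / (2 * v ^ 3)
            - pderivX (fun q => (f₁ q + f₂ q) ^ 2) p / (2 * v ^ 2))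

/-- The reaction–diffusion system at a point `p = (x, t)`. -/
def RDSystem (α β v μ : ℝ) (f₁ f₂ : ℝ × ℝ → ℝ) (p : ℝ × ℝ) : Prop :=
  pderivT f₁ p + v * pderivX f₁ p
      = μ * pderivX (pderivX f₁) p + Kmu α β v μ f₁ f₂ p ∧
  pderivT f₂ p - v * pderivX f₂ p
      = μ * pderivX (pderivX f₂) p - Kmu α β v μ f₁ f₂ p

/-- Modified Bessel function `I₀`. -/
noncomputable def besselI0 (z : ℝ) : ℝ :=
  ∑' k : ℕ, (z / 2) ^ (2 * k) / (Nat.factorial k : ℝ) ^ 2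

/-- Modified Bessel function `I₁`. -/
noncomputable def besselI1 (z : ℝ) : ℝ :=
  ∑' k : ℕ, (z / 2) ^ (2 * k + 1) / ((Nat.factorial k : ℝ) * (Nat.factorial (k + 1) : ℝ))

/-- The explicit solution formula for the Klein–Gordon type equation. -/
noncomputable def Wsol (α β v : ℝ) (W₀ W₁ : ℝ → ℝ) (x t : ℝ) : ℝ :=
  (W₀ (x + v * t) + W₀ (x - v * t)) / 2
    + (1 / 2) * ∫ y in (x - v * t)..(x + v * t),
        besselI0 (Real.sqrt (α * β) / v * Real.sqrt (v ^ 2 * t ^ 2 - (x - y) ^ 2)) * W₁ y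
    + (Real.sqrt (α * β) * t / 2) * ∫ y in (x - v * t)..(x + v * t),
        besselI1 (Real.sqrt (α * β) / v * Real.sqrt (v ^ 2 * t ^ 2 - (x - y) ^ 2)) /
          Real.sqrt (v ^ 2 * t ^ 2 - (x - y) ^ 2) * W₀ y

/-- The heat kernel with diffusivity `μ`. -/
noncomputable def heatG (μ x t : ℝ) : ℝ :=
  (Real.sqrt (4 * π * μ * t))⁻¹ * Real.exp (-(x ^ 2) / (4 * μ * t))



section Aux

private lemma sliceX_hasDerivAt {f : ℝ × ℝ → ℝ} {p : ℝ × ℝ} (hf : DifferentiableAt ℝ f p) :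
    HasDerivAt (fun x => f (x, p.2)) (fderiv ℝ f p (1, 0)) p.1 := by
  have h1 : HasDerivAt (fun x : ℝ => (x, p.2)) ((1 : ℝ), (0 : ℝ)) p.1 :=
    (hasDerivAt_id p.1).prodMk (hasDerivAt_const _ _)
  have h2 : HasFDerivAt f (fderiv ℝ f p) p := hf.hasFDerivAt
  exact h2.comp_hasDerivAt p.1 h1

private lemma sliceT_hasDerivAt {f : ℝ × ℝ → ℝ} {p : ℝ × ℝ} (hf : DifferentiableAt ℝ f p) :
    HasDerivAt (fun t => f (p.1, t)) (fderiv ℝ f p (0, 1)) p.2 := by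
  have h1 : HasDerivAt (fun t : ℝ => (p.1, t)) ((0 : ℝ), (1 : ℝ)) p.2 :=
    (hasDerivAt_const _ _).prodMk (hasDerivAt_id p.2)
  have h2 : HasFDerivAt f (fderiv ℝ f p) p := hf.hasFDerivAt
  exact h2.comp_hasDerivAt p.2 h1

private lemma pderivX_eq {f : ℝ × ℝ → ℝ} {p : ℝ × ℝ} (hf : DifferentiableAt ℝ f p) :
    pderivX f p = fderiv ℝ f p (1, 0) :=
  (sliceX_hasDerivAt hf).deriv

private lemma pderivT_eq {f : ℝ × ℝ → ℝ} {p : ℝ × ℝ} (hf : DifferentiableAt ℝ f p) :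
    pderivT f p = fderiv ℝ f p (0, 1) :=
  (sliceT_hasDerivAt hf).deriv

private lemma contDiff_pderivX {n m : WithTop ℕ∞} {F : ℝ × ℝ → ℝ}
    (hF : ContDiff ℝ n F) (h : m + 1 ≤ n) : ContDiff ℝ m (pderivX F) := by
  have hd : Differentiable ℝ F := hF.differentiable (fun h0 => by subst h0; simp at h)
  have hfun : pderivX F = fun q => fderiv ℝ F q (1, 0) := funext fun q => pderivX_eq (hd q)
  rw [hfun]
  exact (hF.fderiv_right h).clm_apply contDiff_const

private lemma contDiff_pderivT {n m : WithTop ℕ∞} {F : ℝ × ℝ → ℝ}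
    (hF : ContDiff ℝ n F) (h : m + 1 ≤ n) : ContDiff ℝ m (pderivT F) := by
  have hd : Differentiable ℝ F := hF.differentiable (fun h0 => by subst h0; simp at h)
  have hfun : pderivT F = fun q => fderiv ℝ F q (0, 1) := funext fun q => pderivT_eq (hd q)
  rw [hfun]
  exact (hF.fderiv_right h).clm_apply contDiff_const

private lemma pderivX_lin {f g h : ℝ × ℝ → ℝ}
    (hf : Differentiable ℝ f) (hg : Differentiable ℝ g) (hh : Differentiable ℝ h)
    (a b : ℝ) (p : ℝ × ℝ) :
    pderivX (fun q => f q + a * g q + b * h q) p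
      = pderivX f p + a * pderivX g p + b * pderivX h p := by
  have Hf := sliceX_hasDerivAt (hf p)
  have Hg := sliceX_hasDerivAt (hg p)
  have Hh := sliceX_hasDerivAt (hh p)
  have H := (Hf.add (Hg.const_mul a)).add (Hh.const_mul b)
  rw [pderivX_eq (hf p), pderivX_eq (hg p), pderivX_eq (hh p)]
  exact H.deriv

private lemma pderivT_lin {f g h : ℝ × ℝ → ℝ}
    (hf : Differentiable ℝ f) (hg : Differentiable ℝ g) (hh : Differentiable ℝ h)
    (a b : ℝ) (p : ℝ × ℝ) :
    pderivT (fun q => f q + a * g q + b * h q) p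
      = pderivT f p + a * pderivT g p + b * pderivT h p := by
  have Hf := sliceT_hasDerivAt (hf p)
  have Hg := sliceT_hasDerivAt (hg p)
  have Hh := sliceT_hasDerivAt (hh p)
  have H := (Hf.add (Hg.const_mul a)).add (Hh.const_mul b)
  rw [pderivT_eq (hf p), pderivT_eq (hg p), pderivT_eq (hh p)]
  exact H.deriv

private lemma pderiv_comm {F : ℝ × ℝ → ℝ} (hF : ContDiff ℝ 2 F) (p : ℝ × ℝ) :
    pderivT (pderivX F) p = pderivX (pderivT F) p := by
  have hd1 : Differentiable ℝ F := hF.differentiable (by norm_num)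
  have hd2 : Differentiable ℝ (fderiv ℝ F) :=
    (hF.fderiv_right (m := 1) (by norm_num)).differentiable (by norm_num)
  have hX : pderivX F = fun q => fderiv ℝ F q (1, 0) := funext fun q => pderivX_eq (hd1 q)
  have hT : pderivT F = fun q => fderiv ℝ F q (0, 1) := funext fun q => pderivT_eq (hd1 q)
  have key : ∀ w u : ℝ × ℝ,
      fderiv ℝ (fun q => fderiv ℝ F q w) p u = fderiv ℝ (fderiv ℝ F) p u w := by
    intro w u
    rw [fderiv_clm_apply (hd2 p) (differentiableAt_const w)]
    simp
  have hda : ∀ w : ℝ × ℝ, DifferentiableAt ℝ (fun q => fderiv ℝ F q w) p :=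
    fun w => (hd2 p).clm_apply (differentiableAt_const w)
  have hsymm := (hF.contDiffAt (x := p)).isSymmSndFDerivAt (by simp [minSmoothness_of_isRCLikeNormedField])
  rw [hX, hT, pderivT_eq (hda (1, 0)), pderivX_eq (hda (0, 1)), key, key]
  exact hsymm.eq (0, 1) (1, 0)

private lemma opComm {v μ : ℝ} {F : ℝ × ℝ → ℝ} (hF : ContDiff ℝ 4 F) (p : ℝ × ℝ) :
    Oplus v μ (Ominus v μ F) p = Ominus v μ (Oplus v μ F) p := by
  have h3X : ContDiff ℝ 3 (pderivX F) := contDiff_pderivX hF (by norm_num)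
  have h3T : ContDiff ℝ 3 (pderivT F) := contDiff_pderivT hF (by norm_num)
  have h2XX : ContDiff ℝ 2 (pderivX (pderivX F)) := contDiff_pderivX h3X (by norm_num)
  have h2XT : ContDiff ℝ 2 (pderivX (pderivT F)) := contDiff_pderivX h3T (by norm_num)
  have h1XXX : ContDiff ℝ 1 (pderivX (pderivX (pderivX F))) := contDiff_pderivX h2XX (by norm_num)
  have dT : Differentiable ℝ (pderivT F) := h3T.differentiable (by norm_num)
  have dX : Differentiable ℝ (pderivX F) := h3X.differentiable (by norm_num)
  have dXX : Differentiable ℝ (pderivX (pderivX F)) := h2XX.differentiable (by norm_num)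
  have dXT : Differentiable ℝ (pderivX (pderivT F)) := h2XT.differentiable (by norm_num)
  have dXXX : Differentiable ℝ (pderivX (pderivX (pderivX F))) :=
    h1XXX.differentiable (by norm_num)
  have hOm : Ominus v μ F
      = fun q => pderivT F q + (-v) * pderivX F q + (-μ) * pderivX (pderivX F) q := by
    funext q; simp only [Ominus]; ring
  have hOp : Oplus v μ F
      = fun q => pderivT F q + v * pderivX F q + (-μ) * pderivX (pderivX F) q := by
    funext q; simp only [Oplus]; ring
  have hXGm : pderivX (fun q => pderivT F q + (-v) * pderivX F q + (-μ) * pderivX (pderivX F) q)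
      = fun q => pderivX (pderivT F) q + (-v) * pderivX (pderivX F) q
          + (-μ) * pderivX (pderivX (pderivX F)) q :=
    funext fun q => pderivX_lin dT dX dXX (-v) (-μ) q
  have hXGp : pderivX (fun q => pderivT F q + v * pderivX F q + (-μ) * pderivX (pderivX F) q)
      = fun q => pderivX (pderivT F) q + v * pderivX (pderivX F) q
          + (-μ) * pderivX (pderivX (pderivX F)) q :=
    funext fun q => pderivX_lin dT dX dXX v (-μ) q
  have A1 : pderivT (Ominus v μ F) p
      = pderivT (pderivT F) p + (-v) * pderivT (pderivX F) p
          + (-μ) * pderivT (pderivX (pderivX F)) p := by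
    rw [hOm]; exact pderivT_lin dT dX dXX (-v) (-μ) p
  have A2 : pderivX (Ominus v μ F) p
      = pderivX (pderivT F) p + (-v) * pderivX (pderivX F) p
          + (-μ) * pderivX (pderivX (pderivX F)) p := by
    rw [hOm]; exact pderivX_lin dT dX dXX (-v) (-μ) p
  have A3 : pderivX (pderivX (Ominus v μ F)) p
      = pderivX (pderivX (pderivT F)) p + (-v) * pderivX (pderivX (pderivX F)) p
          + (-μ) * pderivX (pderivX (pderivX (pderivX F))) p := by
    rw [hOm, hXGm]; exact pderivX_lin dXT dXX dXXX (-v) (-μ) p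
  have B1 : pderivT (Oplus v μ F) p
      = pderivT (pderivT F) p + v * pderivT (pderivX F) p
          + (-μ) * pderivT (pderivX (pderivX F)) p := by
    rw [hOp]; exact pderivT_lin dT dX dXX v (-μ) p
  have B2 : pderivX (Oplus v μ F) p
      = pderivX (pderivT F) p + v * pderivX (pderivX F) p
          + (-μ) * pderivX (pderivX (pderivX F)) p := by
    rw [hOp]; exact pderivX_lin dT dX dXX v (-μ) p
  have B3 : pderivX (pderivX (Oplus v μ F)) p
      = pderivX (pderivX (pderivT F)) p + v * pderivX (pderivX (pderivX F)) p
          + (-μ) * pderivX (pderivX (pderivX (pderivX F))) p := by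
    rw [hOp, hXGp]; exact pderivX_lin dXT dXX dXXX v (-μ) p
  have hc : pderivT (pderivX F) p = pderivX (pderivT F) p :=
    pderiv_comm (hF.of_le (by norm_num)) p
  show pderivT (Ominus v μ F) p + v * pderivX (Ominus v μ F) p
        - μ * pderivX (pderivX (Ominus v μ F)) p
      = pderivT (Oplus v μ F) p - v * pderivX (Oplus v μ F) p
        - μ * pderivX (pderivX (Oplus v μ F)) p
  rw [A1, A2, A3, B1, B2, B3, hc]
  ring

private lemma pderivX_neg (G : ℝ × ℝ → ℝ) (q : ℝ × ℝ) :
    pderivX (fun r => -(G r)) q = -pderivX G q := by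
  simp only [pderivX]; exact deriv.neg

private lemma pderivT_neg (G : ℝ × ℝ → ℝ) (q : ℝ × ℝ) :
    pderivT (fun r => -(G r)) q = -pderivT G q := by
  simp only [pderivT]; exact deriv.neg

end Aux

/-- For `f₁ = −O⁻F`, `f₂ = O⁺F`, the reaction–diffusion system is equivalent
to the scalar equation `O⁺O⁻F = −K_μ(f₁,f₂)`, and each equation separately is equivalent
to the scalar equation. -/
theorem system_iff_scalar (α β v μ : ℝ) (hα : 0 < α) (hβ : 0 < β) (hv : 0 < v) (hμ : 0 < μ)
    (F : ℝ × ℝ → ℝ) (hF : ContDiff ℝ 4 F)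
    (f₁ f₂ : ℝ × ℝ → ℝ)
    (hf₁ : f₁ = fun p => -(Ominus v μ F p))
    (hf₂ : f₂ = fun p => Oplus v μ F p) :
    ((∀ p : ℝ × ℝ, RDSystem α β v μ f₁ f₂ p) ↔
        (∀ p : ℝ × ℝ, Oplus v μ (Ominus v μ F) p = - Kmu α β v μ f₁ f₂ p)) ∧
    (∀ p : ℝ × ℝ,
      ((pderivT f₁ p + v * pderivX f₁ p
          = μ * pderivX (pderivX f₁) p + Kmu α β v μ f₁ f₂ p) ↔
        Oplus v μ (Ominus v μ F) p = - Kmu α β v μ f₁ f₂ p) ∧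
      ((pderivT f₂ p - v * pderivX f₂ p
          = μ * pderivX (pderivX f₂) p - Kmu α β v μ f₁ f₂ p) ↔
        Oplus v μ (Ominus v μ F) p = - Kmu α β v μ f₁ f₂ p)) := by
  subst hf₁ hf₂
  have main : ∀ p : ℝ × ℝ,
      ((pderivT (fun p => -(Ominus v μ F p)) p + v * pderivX (fun p => -(Ominus v μ F p)) p
          = μ * pderivX (pderivX (fun p => -(Ominus v μ F p))) p
            + Kmu α β v μ (fun p => -(Ominus v μ F p)) (fun p => Oplus v μ F p) p) ↔
        Oplus v μ (Ominus v μ F) p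
          = - Kmu α β v μ (fun p => -(Ominus v μ F p)) (fun p => Oplus v μ F p) p) ∧
      ((pderivT (fun p => Oplus v μ F p) p - v * pderivX (fun p => Oplus v μ F p) p
          = μ * pderivX (pderivX (fun p => Oplus v μ F p)) p
            - Kmu α β v μ (fun p => -(Ominus v μ F p)) (fun p => Oplus v μ F p) p) ↔
        Oplus v μ (Ominus v μ F) p
          = - Kmu α β v μ (fun p => -(Ominus v μ F p)) (fun p => Oplus v μ F p) p) := by
    intro p
    set K := Kmu α β v μ (fun p => -(Ominus v μ F p)) (fun p => Oplus v μ F p) p with hK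
    have E1 : pderivT (fun p => -(Ominus v μ F p)) p = -pderivT (Ominus v μ F) p :=
      pderivT_neg _ p
    have E2 : pderivX (fun p => -(Ominus v μ F p)) p = -pderivX (Ominus v μ F) p :=
      pderivX_neg _ p
    have hXf1 : pderivX (fun p => -(Ominus v μ F p))
        = fun q => -(pderivX (Ominus v μ F) q) := funext fun q => pderivX_neg _ q
    have E3 : pderivX (pderivX (fun p => -(Ominus v μ F p))) p
        = -pderivX (pderivX (Ominus v μ F)) p := by
      rw [hXf1]; exact pderivX_neg _ p
    have hOpl : Oplus v μ (Ominus v μ F) p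
        = pderivT (Ominus v μ F) p + v * pderivX (Ominus v μ F) p
          - μ * pderivX (pderivX (Ominus v μ F)) p := rfl
    have hOmi : Ominus v μ (Oplus v μ F) p
        = pderivT (Oplus v μ F) p - v * pderivX (Oplus v μ F) p
          - μ * pderivX (pderivX (Oplus v μ F)) p := rfl
    have hcomm : Oplus v μ (Ominus v μ F) p = Ominus v μ (Oplus v μ F) p := opComm hF p
    have hEta1 : pderivT (fun p => Oplus v μ F p) p = pderivT (Oplus v μ F) p := rfl
    have hEta2 : pderivX (fun p => Oplus v μ F p) p = pderivX (Oplus v μ F) p := rfl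
    have hEta3 : pderivX (pderivX (fun p => Oplus v μ F p)) p
        = pderivX (pderivX (Oplus v μ F)) p := rfl
    constructor
    · rw [E1, E2, E3, hOpl]
      constructor <;> intro h <;> linarith
    · rw [hEta1, hEta2, hEta3, hcomm, hOmi]
      constructor <;> intro h <;> linarith
  refine ⟨⟨fun h p => ((main p).1).mp (h p).1, fun h p => ⟨((main p).1).mpr (h p), ((main p).2).mpr (h p)⟩⟩, main⟩
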